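/- Let r₀ ∈ (0,1) be the unique zero in (0,1) of the derivative of φ, where φ(r) := √(r(1−r)) + (1−r)^{3/2}·log(1+√r) − (1/2)·(1−r)^{3/2}·log(1−r). Then the derivative of φ is strictly positive on (0,r₀) and strictly negative on (r₀,1); consequently φ is strictly increasing on (0,r₀] and strictly decreasing on [r₀,1). -/

import Mathlib

/-- `φ(r) = √(r(1−r)) + (1−r)^{3/2}·log(1+√r) − (1/2)(1−r)^{3/2}·log(1−r)`. -/
noncomputable def phi (r : ℝ) : ℝ :=
  Real.sqrt (r * (1 - r)) + (1 - r) ^ ((3 : ℝ) / 2) * Real.log (1 + Real.sqrt r)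
    - (1 / 2) * (1 - r) ^ ((3 : ℝ) / 2) * Real.log (1 - r)

/-- Explicit formula for the derivative of `phi` on `(0,1)`. -/
noncomputable def phiD (r : ℝ) : ℝ :=
  (1 - 2*r) / (2 * Real.sqrt (r * (1 - r)))
    - 3/2 * Real.sqrt (1 - r) * Real.log (1 + Real.sqrt r)
    + (1 - r) * Real.sqrt (1 - r) / (2 * Real.sqrt r * (1 + Real.sqrt r))
    + 3/4 * Real.sqrt (1 - r) * Real.log (1 - r)
    + 1/2 * Real.sqrt (1 - r)

lemma hasDerivAt_phi {r : ℝ} (h0 : 0 < r) (h1 : r < 1) : HasDerivAt phi (phiD r) r := by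
  have hr1 : (0:ℝ) < 1 - r := by linarith
  have hs : 0 < Real.sqrt r := Real.sqrt_pos.2 h0
  have h1s : 0 < 1 + Real.sqrt r := by positivity
  have hmul : HasDerivAt (fun x : ℝ => x * (1 - x)) (1 - 2*r) r := by
    have := (hasDerivAt_id r).mul ((hasDerivAt_const r (1:ℝ)).sub (hasDerivAt_id r))
    refine this.congr_deriv ?_
    simp [id]; ring
  have hA : HasDerivAt (fun x : ℝ => Real.sqrt (x * (1-x)))
      ((1-2*r)/(2*Real.sqrt (r*(1-r)))) r := hmul.sqrt (by positivity)
  have hbase : HasDerivAt (fun x : ℝ => 1 - x) (-1) r := by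
    exact (hasDerivAt_id' r).const_sub (1:ℝ)
  have hpow : HasDerivAt (fun x : ℝ => (1-x) ^ ((3:ℝ)/2))
      ((-1) * ((3:ℝ)/2) * (1-r) ^ ((3:ℝ)/2 - 1)) r :=
    hbase.rpow_const (Or.inl hr1.ne')
  have hsqr : HasDerivAt (fun x : ℝ => Real.sqrt x) (1/(2*Real.sqrt r)) r :=
    Real.hasDerivAt_sqrt h0.ne'
  have hlog1 : HasDerivAt (fun x : ℝ => Real.log (1 + Real.sqrt x))
      ((0 + 1/(2*Real.sqrt r))/(1+Real.sqrt r)) r :=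
    ((hasDerivAt_const r (1:ℝ)).add hsqr).log h1s.ne'
  have hlog2 : HasDerivAt (fun x : ℝ => Real.log (1 - x)) ((-1)/(1-r)) r := by
    have := hbase.log hr1.ne'
    simpa using this
  have H := (hA.add (hpow.mul hlog1)).sub ((hpow.mul hlog2).const_mul (1/2 : ℝ))
  have hfun : phi = fun x : ℝ => Real.sqrt (x*(1-x)) + (1-x)^((3:ℝ)/2) * Real.log (1+Real.sqrt x)
      - (1/2) * ((1-x)^((3:ℝ)/2) * Real.log (1-x)) := by
    funext x; unfold phi; ring
  rw [hfun]
  refine H.congr_deriv ?_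
  have e1 : (1-r) ^ ((3:ℝ)/2 - 1) = Real.sqrt (1-r) := by
    rw [show (3:ℝ)/2 - 1 = 1/2 by norm_num, ← Real.sqrt_eq_rpow]
  have e2 : (1-r) ^ ((3:ℝ)/2) = (1-r) * Real.sqrt (1-r) := by
    rw [show (3:ℝ)/2 = 1 + 1/2 by norm_num, Real.rpow_add hr1, Real.rpow_one,
      ← Real.sqrt_eq_rpow]
  unfold phiD; rw [e1, e2]; symm
  have hlr : Real.log (1-r) = Real.log (1-r) := rfl
  field_simp
  ring

lemma deriv_phi_eq {r : ℝ} (h0 : 0 < r) (h1 : r < 1) : deriv phi r = phiD r :=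
  (hasDerivAt_phi h0 h1).deriv

lemma phiD_pos_small {r : ℝ} (h0 : 0 < r) (h1 : r < 1/100) : 0 < phiD r := by
  have hr1 : (0:ℝ) < 1 - r := by linarith
  have hs : 0 < Real.sqrt r := Real.sqrt_pos.2 h0
  have hs2 : Real.sqrt r ^ 2 = r := Real.sq_sqrt h0.le
  have hs10 : Real.sqrt r < 1/10 := by nlinarith
  have ht : 0 < Real.sqrt (1-r) := Real.sqrt_pos.2 hr1
  have ht2 : Real.sqrt (1-r) ^ 2 = 1 - r := Real.sq_sqrt hr1.le
  have ht1 : Real.sqrt (1-r) ≤ 1 := by nlinarith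
  have hu : 0 < Real.sqrt (r*(1-r)) := Real.sqrt_pos.2 (by nlinarith)
  have hu2 : Real.sqrt (r*(1-r)) ^ 2 = r*(1-r) := Real.sq_sqrt (by nlinarith)
  have hule : Real.sqrt (r*(1-r)) ≤ Real.sqrt r := Real.sqrt_le_sqrt (by nlinarith)
  -- first term is large
  have hT1 : (49:ℝ)/10 ≤ (1 - 2*r) / (2 * Real.sqrt (r * (1 - r))) := by
    rw [le_div_iff₀ (by positivity)]
    nlinarith
  -- log bounds
  have hlog1a : (0:ℝ) ≤ Real.log (1 + Real.sqrt r) := Real.log_nonneg (by linarith)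
  have hlog1b : Real.log (1 + Real.sqrt r) ≤ Real.sqrt r := by
    have := Real.log_le_sub_one_of_pos (show (0:ℝ) < 1 + Real.sqrt r by linarith)
    linarith
  have hlog2a : Real.log (1-r) ≤ 0 := Real.log_nonpos (by linarith) (by linarith)
  have hlog2b : -(1:ℝ)/99 ≤ Real.log (1-r) := by
    have h := Real.log_le_sub_one_of_pos (show (0:ℝ) < (1-r)⁻¹ by positivity)
    rw [Real.log_inv] at h
    have : (1-r)⁻¹ ≤ 100/99 := by
      rw [inv_le_comm₀ (by linarith) (by norm_num)]; linarith
    linarith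
  have hT3 : 0 ≤ (1 - r) * Real.sqrt (1 - r) / (2 * Real.sqrt r * (1 + Real.sqrt r)) := by
    positivity
  unfold phiD
  nlinarith [mul_nonneg ht.le hlog1a]

lemma phiD_neg_big {r : ℝ} (h0 : 19/20 < r) (h1 : r < 1) : phiD r < 0 := by
  have hr0 : (0:ℝ) < r := by linarith
  have hr1 : (0:ℝ) < 1 - r := by linarith
  have hs : 0 < Real.sqrt r := Real.sqrt_pos.2 hr0
  have hs2 : Real.sqrt r ^ 2 = r := Real.sq_sqrt hr0.le
  have hs9 : (9:ℝ)/10 ≤ Real.sqrt r := by nlinarith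
  have ht : 0 < Real.sqrt (1-r) := Real.sqrt_pos.2 hr1
  have ht2 : Real.sqrt (1-r) ^ 2 = 1 - r := Real.sq_sqrt hr1.le
  have htq : Real.sqrt (1-r) ≤ 1/4 := by nlinarith
  have hu : 0 < Real.sqrt (r*(1-r)) := Real.sqrt_pos.2 (by nlinarith)
  have hu2 : Real.sqrt (r*(1-r)) ^ 2 = r*(1-r) := Real.sq_sqrt (by nlinarith)
  have hule : Real.sqrt (r*(1-r)) ≤ Real.sqrt (1-r) := Real.sqrt_le_sqrt (by nlinarith)
  -- first term is very negative
  have hT1 : (1 - 2*r) / (2 * Real.sqrt (r * (1 - r))) ≤ -9/5 := by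
    rw [div_le_iff₀ (by positivity)]
    nlinarith
  have hlog1a : (0:ℝ) ≤ Real.log (1 + Real.sqrt r) := Real.log_nonneg (by linarith)
  have hlog2a : Real.log (1-r) ≤ 0 := Real.log_nonpos (by linarith) (by linarith)
  have hT3 : (1 - r) * Real.sqrt (1 - r) / (2 * Real.sqrt r * (1 + Real.sqrt r))
      ≤ Real.sqrt (1-r) := by
    rw [div_le_iff₀ (by positivity)]
    nlinarith
  unfold phiD
  nlinarith [mul_nonneg ht.le hlog1a, mul_nonpos_of_nonneg_of_nonpos ht.le hlog2a]

/-- If `r₀` is the unique zero of `φ′` in `(0,1)`, then `φ′ > 0` on `(0,r₀)` and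
`φ′ < 0` on `(r₀,1)`; consequently `φ` is strictly increasing on `(0,r₀]` and strictly
decreasing on `[r₀,1)`. -/
theorem stmt_11 (r₀ : ℝ) (hr₀ : r₀ ∈ Set.Ioo (0 : ℝ) 1) (hzero : deriv phi r₀ = 0)
    (huniq : ∀ r ∈ Set.Ioo (0 : ℝ) 1, deriv phi r = 0 → r = r₀) :
    (∀ r ∈ Set.Ioo (0 : ℝ) r₀, 0 < deriv phi r) ∧
    (∀ r ∈ Set.Ioo r₀ (1 : ℝ), deriv phi r < 0) ∧
    StrictMonoOn phi (Set.Ioc (0 : ℝ) r₀) ∧ StrictAntiOn phi (Set.Ico r₀ (1 : ℝ)) := by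
  obtain ⟨hr₀0, hr₀1⟩ := hr₀
  -- positivity on (0, r₀)
  have hpos : ∀ r ∈ Set.Ioo (0 : ℝ) r₀, 0 < deriv phi r := by
    rintro r ⟨hra, hrb⟩
    have hr1 : r < 1 := lt_trans hrb hr₀1
    rw [deriv_phi_eq hra hr1]
    by_contra hle
    push_neg at hle
    have hne : phiD r ≠ 0 := by
      intro h
      have := huniq r ⟨hra, hr1⟩ (by rw [deriv_phi_eq hra hr1]; exact h)
      exact absurd this (ne_of_lt hrb)
    have hneg : phiD r < 0 := lt_of_le_of_ne hle hne
    set a : ℝ := min r (1/100) / 2 with ha_def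
    have ha0 : 0 < a := by positivity
    have har : a < r := by
      have : a ≤ r / 2 := by
        apply div_le_div_of_nonneg_right ?_ ?_ |>.trans_eq rfl
        · exact min_le_left _ _
        · norm_num
      linarith
    have ha100 : a < 1/100 := by
      have : a ≤ (1/100)/2 := by
        apply div_le_div_of_nonneg_right (min_le_right _ _) (by norm_num)
      linarith
    have haF : 0 < phiD a := phiD_pos_small ha0 ha100
    -- Darboux on [a, r]
    have hderivs : ∀ x ∈ Set.Icc a r, HasDerivWithinAt phi (phiD x) (Set.Icc a r) x := by
      intro x ⟨hx1, hx2⟩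
      exact (hasDerivAt_phi (lt_of_lt_of_le ha0 hx1) (lt_of_le_of_lt hx2 hr1)).hasDerivWithinAt
    obtain ⟨c, hc, hcz⟩ := exists_hasDerivWithinAt_eq_of_lt_of_gt har.le hderivs
      (m := 0) haF hneg
    have hc01 : c ∈ Set.Ioo (0:ℝ) 1 := ⟨lt_trans ha0 hc.1, lt_trans (lt_trans hc.2 hrb) hr₀1⟩
    have hceq := huniq c hc01 (by rw [deriv_phi_eq hc01.1 hc01.2]; exact hcz)
    exact absurd hceq (ne_of_lt (lt_trans hc.2 hrb))
  -- negativity on (r₀, 1)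
  have hneg : ∀ r ∈ Set.Ioo r₀ (1 : ℝ), deriv phi r < 0 := by
    rintro r ⟨hra, hrb⟩
    have hr0 : 0 < r := lt_trans hr₀0 hra
    rw [deriv_phi_eq hr0 hrb]
    by_contra hle
    push_neg at hle
    have hne : phiD r ≠ 0 := by
      intro h
      have := huniq r ⟨hr0, hrb⟩ (by rw [deriv_phi_eq hr0 hrb]; exact h)
      exact absurd this (ne_of_gt hra)
    have hposr : 0 < phiD r := lt_of_le_of_ne hle (Ne.symm hne)
    set b : ℝ := (max r (19/20) + 1) / 2 with hb_def
    have hbr : r < b := by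
      have : r ≤ max r (19/20) := le_max_left _ _
      have hm1 : max r (19/20) < 1 := max_lt hrb (by norm_num)
      unfold b
      linarith
    have hb1 : b < 1 := by
      have hm1 : max r (19/20) < 1 := max_lt hrb (by norm_num)
      unfold b; linarith
    have hb19 : 19/20 < b := by
      have : (19:ℝ)/20 ≤ max r (19/20) := le_max_right _ _
      unfold b; linarith
    have hbF : phiD b < 0 := phiD_neg_big hb19 hb1
    have hderivs : ∀ x ∈ Set.Icc r b, HasDerivWithinAt phi (phiD x) (Set.Icc r b) x := by
      intro x ⟨hx1, hx2⟩
      exact (hasDerivAt_phi (lt_of_lt_of_le hr0 hx1) (lt_of_le_of_lt hx2 hb1)).hasDerivWithinAt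
    obtain ⟨c, hc, hcz⟩ := exists_hasDerivWithinAt_eq_of_lt_of_gt hbr.le hderivs
      (m := 0) hposr hbF
    have hc01 : c ∈ Set.Ioo (0:ℝ) 1 := ⟨lt_trans hr0 hc.1, lt_trans hc.2 hb1⟩
    have hceq := huniq c hc01 (by rw [deriv_phi_eq hc01.1 hc01.2]; exact hcz)
    exact absurd hceq (ne_of_gt (lt_trans hra hc.1))
  refine ⟨hpos, hneg, ?_, ?_⟩
  · apply strictMonoOn_of_deriv_pos (convex_Ioc 0 r₀)
    · intro x hx
      exact (hasDerivAt_phi hx.1 (lt_of_le_of_lt hx.2 hr₀1)).differentiableAt.continuousAt.continuousWithinAt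
    · intro x hx
      rw [interior_Ioc] at hx
      exact hpos x hx
  · apply strictAntiOn_of_deriv_neg (convex_Ico r₀ 1)
    · intro x hx
      exact (hasDerivAt_phi (lt_of_lt_of_le hr₀0 hx.1) hx.2).differentiableAt.continuousAt.continuousWithinAt
    · intro x hx
      rw [interior_Ico] at hx
      exact hneg x hx
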